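/- arXiv:1009.3137 — 2 statements merged into one kernel-verified Lean document; each statement's English description precedes it below -/
import Mathlib

section
/- Let t₁, t₂, t₃, t₄ ∈ ℂ \ {0,1} with t₁t₂t₃t₄ = 1, set u₁ = t₁'t₄'', u₂ = t₁'t₂'', u₃ = t₃'t₂'', u₄ = t₃'t₄'', u₅ = 1/(u₁u₃) (where x' = 1/(1-x), x'' = 1-1/x), and assume u₁,...,u₅ ∉ {0,1}. Then the inverse relations hold: t₁ = u₁''u₂''u₅', t₂ = u₂'u₃'u₅'', t₃ = u₃''u₄''u₅', t₄ = u₄'u₁'u₅''. -/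
open Complex

set_option maxHeartbeats 1000000

/-- Inverse relations of the shape parameters under the 4-5 move. -/
theorem four_five_inverse (t₁ t₂ t₃ t₄ u₁ u₂ u₃ u₄ u₅ : ℂ)
    (h₁0 : t₁ ≠ 0) (h₁1 : t₁ ≠ 1) (h₂0 : t₂ ≠ 0) (h₂1 : t₂ ≠ 1)
    (h₃0 : t₃ ≠ 0) (h₃1 : t₃ ≠ 1) (h₄0 : t₄ ≠ 0) (h₄1 : t₄ ≠ 1)
    (hprod : t₁ * t₂ * t₃ * t₄ = 1)
    (hu₁ : u₁ = (1 / (1 - t₁)) * (1 - 1 / t₄))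
    (hu₂ : u₂ = (1 / (1 - t₁)) * (1 - 1 / t₂))
    (hu₃ : u₃ = (1 / (1 - t₃)) * (1 - 1 / t₂))
    (hu₄ : u₄ = (1 / (1 - t₃)) * (1 - 1 / t₄))
    (hu₅ : u₅ = 1 / (u₁ * u₃))
    (hu₁0 : u₁ ≠ 0) (hu₁1 : u₁ ≠ 1) (hu₂0 : u₂ ≠ 0) (hu₂1 : u₂ ≠ 1)
    (hu₃0 : u₃ ≠ 0) (hu₃1 : u₃ ≠ 1) (hu₄0 : u₄ ≠ 0) (hu₄1 : u₄ ≠ 1)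
    (hu₅0 : u₅ ≠ 0) (hu₅1 : u₅ ≠ 1) :
    t₁ = (1 - 1 / u₁) * (1 - 1 / u₂) * (1 / (1 - u₅)) ∧
    t₂ = (1 / (1 - u₂)) * (1 / (1 - u₃)) * (1 - 1 / u₅) ∧
    t₃ = (1 - 1 / u₃) * (1 - 1 / u₄) * (1 / (1 - u₅)) ∧
    t₄ = (1 / (1 - u₄)) * (1 / (1 - u₁)) * (1 - 1 / u₅) := by
  have n1 : (1:ℂ) - t₁ ≠ 0 := sub_ne_zero_of_ne (Ne.symm h₁1)
  have n3 : (1:ℂ) - t₃ ≠ 0 := sub_ne_zero_of_ne (Ne.symm h₃1)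
  have m2 : t₂ - 1 ≠ 0 := sub_ne_zero_of_ne h₂1
  have m4 : t₄ - 1 ≠ 0 := sub_ne_zero_of_ne h₄1
  -- shapes of u's
  have e1 : 1 - 1 / u₁ = (t₁ * t₄ - 1) / (t₄ - 1) := by
    rw [hu₁]; field_simp; ring
  have e2 : 1 - 1 / u₂ = (t₁ * t₂ - 1) / (t₂ - 1) := by
    rw [hu₂]; field_simp; ring
  have e3 : 1 - 1 / u₃ = (t₂ * t₃ - 1) / (t₂ - 1) := by
    rw [hu₃]; field_simp; ring
  have e4 : 1 - 1 / u₄ = (t₃ * t₄ - 1) / (t₄ - 1) := by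
    rw [hu₄]; field_simp; ring
  have f1 : 1 - u₁ = (1 - t₁ * t₄) / ((1 - t₁) * t₄) := by
    rw [hu₁]; field_simp; ring
  have f2 : 1 - u₂ = (1 - t₁ * t₂) / ((1 - t₁) * t₂) := by
    rw [hu₂]; field_simp; ring
  have f3 : 1 - u₃ = (1 - t₂ * t₃) / ((1 - t₃) * t₂) := by
    rw [hu₃]; field_simp; ring
  have f4 : 1 - u₄ = (1 - t₃ * t₄) / ((1 - t₃) * t₄) := by
    rw [hu₄]; field_simp; ring
  -- nonvanishing of the pair products minus 1
  have hA : t₁ * t₄ - 1 ≠ 0 := by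
    intro h
    apply hu₁1
    have : 1 - 1 / u₁ = 0 := by rw [e1, h, zero_div]
    field_simp at this
    linear_combination this
  have hB : t₁ * t₂ - 1 ≠ 0 := by
    intro h
    apply hu₂1
    have : 1 - 1 / u₂ = 0 := by rw [e2, h, zero_div]
    field_simp at this
    linear_combination this
  have hC : t₂ * t₃ - 1 ≠ 0 := by
    intro h
    apply hu₃1
    have : 1 - 1 / u₃ = 0 := by rw [e3, h, zero_div]
    field_simp at this
    linear_combination this
  have hD : t₃ * t₄ - 1 ≠ 0 := by
    intro h
    apply hu₄1
    have : 1 - 1 / u₄ = 0 := by rw [e4, h, zero_div]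
    field_simp at this
    linear_combination this
  have hA' : (1:ℂ) - t₁ * t₄ ≠ 0 := by intro h; apply hA; linear_combination -h
  have hB' : (1:ℂ) - t₁ * t₂ ≠ 0 := by intro h; apply hB; linear_combination -h
  have hC' : (1:ℂ) - t₂ * t₃ ≠ 0 := by intro h; apply hC; linear_combination -h
  have hD' : (1:ℂ) - t₃ * t₄ ≠ 0 := by intro h; apply hD; linear_combination -h
  have h4e : t₄ = 1 / (t₁ * t₂ * t₃) := by
    field_simp
    linear_combination hprod
  have hE : 1 - t₁ * t₂ * t₃ ≠ 0 := by
    intro h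
    apply m4
    rw [h4e]
    have h' : t₁ * t₂ * t₃ = 1 := by linear_combination -h
    rw [h']
    norm_num
  -- u₅ as rational function of t's
  have h5 : u₅ = t₂ * t₄ * (1 - t₁) * (1 - t₃) / ((t₂ - 1) * (t₄ - 1)) := by
    rw [hu₅, hu₁, hu₃]; field_simp
  have e5 : 1 - u₅ = (t₁ * t₄ - 1) * (t₁ * t₂ - 1) / (t₁ * (t₂ - 1) * (t₄ - 1)) := by
    rw [h5, h4e]; field_simp [hE, (show (1:ℂ) - t₂ * t₁ * t₃ ≠ 0 by rw [show t₂ * t₁ * t₃ = t₁ * t₂ * t₃ by ring]; exact hE)]; ring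
  have e5' : 1 - u₅ = (t₂ * t₃ - 1) * (t₃ * t₄ - 1) / (t₃ * (t₂ - 1) * (t₄ - 1)) := by
    rw [h5, h4e]; field_simp [hE, (show (1:ℂ) - t₂ * t₁ * t₃ ≠ 0 by rw [show t₂ * t₁ * t₃ = t₁ * t₂ * t₃ by ring]; exact hE)]; ring
  have g5 : 1 - 1 / u₅ = (1 - t₁ * t₂) * (1 - t₂ * t₃) / ((1 - t₁) * (1 - t₃) * t₂) := by
    rw [h5, h4e]; field_simp [hE, (show (1:ℂ) - t₂ * t₁ * t₃ ≠ 0 by rw [show t₂ * t₁ * t₃ = t₁ * t₂ * t₃ by ring]; exact hE)]; ring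
  have g5' : 1 - 1 / u₅ = (1 - t₁ * t₄) * (1 - t₃ * t₄) / ((1 - t₁) * (1 - t₃) * t₄) := by
    rw [g5, div_eq_div_iff (by exact mul_ne_zero (mul_ne_zero n1 n3) h₂0)
      (by exact mul_ne_zero (mul_ne_zero n1 n3) h₄0)]
    linear_combination ((1 - t₁) * (1 - t₃) * (t₂ - t₄)) * hprod
  refine ⟨?_, ?_, ?_, ?_⟩
  · rw [e1, e2, e5]; field_simp
  · rw [f2, f3, g5]; field_simp [hB', hC', (show (1:ℂ) - t₂ * t₁ ≠ 0 by rw [mul_comm]; exact hB')]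
  · rw [e3, e4, e5']; field_simp [hC, hD, (show t₃ * t₂ - 1 ≠ 0 by rw [mul_comm]; exact hC)]
  · rw [f4, f1, g5']; field_simp [hA', hD', (show (1:ℂ) - t₄ * t₃ ≠ 0 by rw [mul_comm]; exact hD'), (show (1:ℂ) - t₄ * t₁ ≠ 0 by rw [mul_comm]; exact hA')]
end

section
/- Let t₁, t₂, t₄ ∈ ℂ \ {0,1} satisfy t₁t₂t₄ = 1 and set u₁ = t₁'t₄'', u₂ = t₁'t₂'' (where x' = 1/(1-x), x'' = 1-1/x), assumed not in {0,1}. Then t₁ = u₁''u₂'', t₂ = u₁u₂', and t₄ = u₁'u₂. -/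
open Complex

/-- Shape-parameter correspondence under the 3-2 move. -/
theorem three_two_inverse (t₁ t₂ t₄ u₁ u₂ : ℂ)
    (h₁0 : t₁ ≠ 0) (h₁1 : t₁ ≠ 1) (h₂0 : t₂ ≠ 0) (h₂1 : t₂ ≠ 1)
    (h₄0 : t₄ ≠ 0) (h₄1 : t₄ ≠ 1)
    (hprod : t₁ * t₂ * t₄ = 1)
    (hu₁ : u₁ = (1 / (1 - t₁)) * (1 - 1 / t₄))
    (hu₂ : u₂ = (1 / (1 - t₁)) * (1 - 1 / t₂))
    (hu₁0 : u₁ ≠ 0) (hu₁1 : u₁ ≠ 1) (hu₂0 : u₂ ≠ 0) (hu₂1 : u₂ ≠ 1) :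
    t₁ = (1 - 1 / u₁) * (1 - 1 / u₂) ∧
    t₂ = u₁ * (1 / (1 - u₂)) ∧
    t₄ = (1 / (1 - u₁)) * u₂ := by
  have h1t₁ : (1 : ℂ) - t₁ ≠ 0 := sub_ne_zero.mpr (Ne.symm h₁1)
  have h1u₁ : (1 : ℂ) - u₁ ≠ 0 := sub_ne_zero.mpr (Ne.symm hu₁1)
  have h1u₂ : (1 : ℂ) - u₂ ≠ 0 := sub_ne_zero.mpr (Ne.symm hu₂1)
  have h1t₂ : t₂ - 1 ≠ 0 := sub_ne_zero.mpr h₂1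
  have ht4 : t₄ = (t₁ * t₂)⁻¹ := by
    field_simp
    linear_combination hprod
  have h12 : (1 : ℂ) - t₁ * t₂ ≠ 0 := by
    intro h
    exact h₄1 (by rw [ht4, show t₁ * t₂ = 1 by linear_combination -h, inv_one])
  have e₁ : u₁ = (1 - t₁ * t₂) / (1 - t₁) := by
    rw [hu₁, ht4]
    field_simp
  have e₂ : u₂ = (t₂ - 1) / ((1 - t₁) * t₂) := by
    rw [hu₂]
    field_simp
  refine ⟨?_, ?_, ?_⟩
  · rw [e₁, e₂]
    field_simp
    ring
  · rw [e₁, e₂]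
    have : (1 : ℂ) - (t₂ - 1) / ((1 - t₁) * t₂) = (1 - t₁ * t₂) / ((1 - t₁) * t₂) := by
      field_simp
      ring
    rw [this]
    have h12' : (1 : ℂ) - t₂ * t₁ ≠ 0 := by rw [mul_comm]; exact h12
    field_simp
  · rw [ht4, e₁, e₂]
    have : (1 : ℂ) - (1 - t₁ * t₂) / (1 - t₁) = t₁ * (t₂ - 1) / (1 - t₁) := by
      field_simp
      ring
    rw [this]
    field_simp
end
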